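/- Let 0 < a₁ < a₂ and a > 0. Then the function θ ↦ ∫₀^{2π} ∫_{a₁}^{a₂} ln|a e^{iθ} − ρ e^{iη}| ρ dρ dη is constant on ℝ: its value at every θ equals its value at θ = 0. Consequently, the trivial deformation (r₁, r₂, x₁¹) = (0,0,0) is a solution of the contour system for every angular velocity Ω ∈ ℝ. -/

import Mathlib

open Real Complex

/-- **Lemma (triviality of the rotationally symmetric deformation).** For
`0 < a₁ < a₂` and `a > 0`, the function
`θ ↦ ∫₀^{2π} ∫_{a₁}^{a₂} ln|a e^{iθ} - ρ e^{iη}| ρ dρ dη` is constant on `ℝ`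
(its value at every `θ` equals its value at `θ = 0`); moreover
`∫₀^{2π} ∫_{a₁}^{a₂} ρ cos η dρ dη = 0`. Consequently the trivial deformation
`(r₁, r₂, x₁¹) = (0,0,0)` solves the contour system for every angular velocity. -/
theorem trivial_deformation_is_solution
    (a₁ a₂ a : ℝ) (h1 : 0 < a₁) (h12 : a₁ < a₂) (ha : 0 < a) :
    (∀ θ : ℝ,
      (∫ η in (0:ℝ)..(2 * π), ∫ ρ in a₁..a₂,
          Real.log (‖(a : ℂ) * Complex.exp (θ * Complex.I)
            - (ρ : ℂ) * Complex.exp (η * Complex.I)‖) * ρ)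
        = ∫ η in (0:ℝ)..(2 * π), ∫ ρ in a₁..a₂,
          Real.log (‖(a : ℂ) * Complex.exp ((0 : ℝ) * Complex.I)
            - (ρ : ℂ) * Complex.exp (η * Complex.I)‖) * ρ) ∧
    (∫ η in (0:ℝ)..(2 * π), ∫ ρ in a₁..a₂, ρ * Real.cos η) = 0 := by
  constructor
  · intro θ
    -- the inner integral as a function of the angle difference
    set F : ℝ → ℝ := fun u => ∫ ρ in a₁..a₂,
        Real.log (‖(a : ℂ) - (ρ : ℂ) * Complex.exp (u * Complex.I)‖) * ρ with hF
    have habs : ∀ (θ η ρ : ℝ),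
        ‖(a : ℂ) * Complex.exp (θ * Complex.I)
          - (ρ : ℂ) * Complex.exp (η * Complex.I)‖
        = ‖(a : ℂ) - (ρ : ℂ) * Complex.exp ((η - θ) * Complex.I)‖ := by
      intro θ η ρ
      have he : Complex.exp ((θ:ℂ) * Complex.I) * Complex.exp ((↑(η - θ):ℂ) * Complex.I)
          = Complex.exp ((η:ℂ) * Complex.I) := by
        rw [← Complex.exp_add]
        congr 1
        push_cast
        ring
      have : (a : ℂ) * Complex.exp (θ * Complex.I) - (ρ : ℂ) * Complex.exp (η * Complex.I)
          = Complex.exp (θ * Complex.I) *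
            ((a : ℂ) - (ρ : ℂ) * Complex.exp ((↑(η - θ):ℂ) * Complex.I)) := by
        rw [← he]; ring
      rw [this, norm_mul, Complex.norm_exp_ofReal_mul_I, one_mul]
      norm_cast
    have hinner : ∀ (θ η : ℝ),
        (∫ ρ in a₁..a₂,
          Real.log (‖(a : ℂ) * Complex.exp (θ * Complex.I)
            - (ρ : ℂ) * Complex.exp (η * Complex.I)‖) * ρ) = F (η - θ) := by
      intro θ η
      simp only [hF]
      congr 1
      funext ρ
      rw [habs]
      norm_cast
    have hper : Function.Periodic F (2 * π) := by
      intro u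
      simp only [hF]
      congr 1
      funext ρ
      have : Complex.exp ((↑(u + 2 * π)) * Complex.I) = Complex.exp (u * Complex.I) := by
        push_cast
        rw [add_mul, Complex.exp_add, Complex.exp_two_pi_mul_I, mul_one]
      rw [this]
    calc (∫ η in (0:ℝ)..(2 * π), ∫ ρ in a₁..a₂,
          Real.log (‖(a : ℂ) * Complex.exp (θ * Complex.I)
            - (ρ : ℂ) * Complex.exp (η * Complex.I)‖) * ρ)
        = ∫ η in (0:ℝ)..(2 * π), F (η - θ) := by
          apply intervalIntegral.integral_congr
          intro η _
          exact hinner θ η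
      _ = ∫ u in (0 - θ)..(2 * π - θ), F u := intervalIntegral.integral_comp_sub_right F θ
      _ = ∫ u in (-θ)..(-θ + 2 * π), F u := by norm_num [sub_eq_add_neg, add_comm]
      _ = ∫ u in (0:ℝ)..(0 + 2 * π), F u := hper.intervalIntegral_add_eq (-θ) 0
      _ = ∫ u in (0:ℝ)..(2 * π), F u := by norm_num
      _ = ∫ η in (0:ℝ)..(2 * π), ∫ ρ in a₁..a₂,
          Real.log (‖(a : ℂ) * Complex.exp ((0 : ℝ) * Complex.I)
            - (ρ : ℂ) * Complex.exp (η * Complex.I)‖) * ρ := by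
          apply intervalIntegral.integral_congr
          intro η _
          exact ((hinner 0 η).trans (by rw [sub_zero])).symm
  · have h : ∀ η : ℝ, (∫ ρ in a₁..a₂, ρ * Real.cos η)
        = (a₂ ^ 2 / 2 - a₁ ^ 2 / 2) * Real.cos η := by
      intro η
      rw [intervalIntegral.integral_mul_const, integral_id]
      ring
    rw [intervalIntegral.integral_congr (fun η _ => h η),
      intervalIntegral.integral_const_mul, integral_cos]
    simp
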